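/- Let H be a group, E a subgroup of H contained in the center of H, N a subgroup of H, S a subgroup of N, and Z a subgroup of E, and suppose that the subgroup N ∩ E is finite. Then the join S ⊔ Z (the subgroup generated by S and Z) has finite index in the subgroup (S ⊔ E) ∩ (Z ⊔ N). -/

import Mathlib

open scoped Pointwise


/-- The finite-index conclusion in the proof of Proposition `prop:semisimple`: if `E` is a
central subgroup of `H`, `N` a subgroup, `S ≤ N`, `Z ≤ E`, and `Λ = N ⊓ E` is finite, then
`S ⊔ Z` has finite index in `(S ⊔ E) ⊓ (Z ⊔ N)`. -/
theorem join_finite_index {H : Type*} [Group H] (E N S Z : Subgroup H)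
    (hE : E ≤ Subgroup.center H) (hS : S ≤ N) (hZ : Z ≤ E)
    (hfin : Finite (N ⊓ E : Subgroup H)) :
    ((S ⊔ Z).subgroupOf ((S ⊔ E) ⊓ (Z ⊔ N))).FiniteIndex := by
  have hEnormal : E.Normal := by
    constructor
    intro n hn g
    have hc := (Subgroup.mem_center_iff.mp (hE hn)) g
    simpa [mul_assoc, hc] using hn
  set K := (S ⊔ E) ⊓ (Z ⊔ N) with hK
  -- embed Λ = N ⊓ E into K
  have hΛK : (N ⊓ E : Subgroup H) ≤ K := by
    apply le_inf
    · exact inf_le_right.trans le_sup_right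
    · exact inf_le_left.trans le_sup_right
  -- the quotient K ⧸ (S ⊔ Z).subgroupOf K is finite: surjection from Λ
  have hsurj : Function.Surjective
      (fun (l : (N ⊓ E : Subgroup H)) =>
        (QuotientGroup.mk (⟨(l : H), hΛK l.2⟩ : K) :
          K ⧸ (S ⊔ Z).subgroupOf K)) := by
    intro q
    induction q using QuotientGroup.induction_on with
    | H g =>
      obtain ⟨hg1, hg2⟩ := g.2
      -- g = s * e with s ∈ S, e ∈ E
      have h1 : (g : H) ∈ (S : Set H) * (E : Set H) := by
        rw [← Subgroup.mul_normal S E]; exact hg1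
      obtain ⟨s, hs, e, he, hse⟩ := h1
      -- g = z * n with z ∈ Z, n ∈ N
      have h2 : (g : H) ∈ (Z : Set H) * (N : Set H) := by
        have hZnorm : Z.Normal := by
          constructor
          intro n hn gg
          have hc := (Subgroup.mem_center_iff.mp (hE (hZ hn))) gg
          simpa [mul_assoc, hc] using hn
        rw [← Subgroup.normal_mul Z N]; exact hg2
      obtain ⟨z, hz, n, hn, hzn⟩ := h2
      have hse' : s * e = (g : H) := hse
      have hzn' : z * n = (g : H) := hzn
      -- λ := z⁻¹ * e ∈ N ⊓ E
      have hzc : ∀ x : H, x * z = z * x := fun x =>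
        ((Subgroup.mem_center_iff.mp (hE (hZ hz))) x)
      have hlam : z⁻¹ * e ∈ N ⊓ E := by
        constructor
        · -- z⁻¹ * e = s⁻¹ * n
          have : z⁻¹ * e = s⁻¹ * n := by
            have h3 : s * e = z * n := by rw [hse', hzn']
            have h4 : e = s⁻¹ * z * n := by
              rw [mul_assoc]; rw [← h3]; group
            rw [h4, hzc s⁻¹]; group
          rw [this]
          exact N.mul_mem (N.inv_mem (hS hs)) hn
        · exact E.mul_mem (E.inv_mem (hZ hz)) he
      refine ⟨⟨z⁻¹ * e, hlam⟩, ?_⟩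
      -- show cosets agree: (z⁻¹e)⁻¹ * g ∈ S ⊔ Z
      apply QuotientGroup.eq.mpr
      simp only [Subgroup.mem_subgroupOf, Subgroup.coe_mul, Subgroup.coe_inv]
      show ((⟨z⁻¹ * e, hΛK hlam⟩ : K) : H)⁻¹ * (g : H) ∈ S ⊔ Z
      have : ((⟨z⁻¹ * e, hΛK hlam⟩ : K) : H)⁻¹ * (g : H) = e⁻¹ * z * (z * n) := by
        rw [← hzn']; group
      rw [this]
      have h4 : e⁻¹ * z * (z * n) = s * z := by
        have h3 : z * n = s * e := by rw [hse', hzn']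
        have hec : ∀ x : H, x * e = e * x := fun x =>
          ((Subgroup.mem_center_iff.mp (hE he)) x)
        calc e⁻¹ * z * (z * n) = e⁻¹ * z * (s * e) := by rw [h3]
          _ = e⁻¹ * (z * s) * e := by group
          _ = e⁻¹ * (s * z) * e := by rw [hzc s]
          _ = e⁻¹ * (s * z * e) := by group
          _ = e⁻¹ * (e * (s * z)) := by rw [hec (s * z)]
          _ = s * z := by group
      rw [h4]
      exact Subgroup.mul_mem _ (Subgroup.mem_sup_left hs) (Subgroup.mem_sup_right hz)
  have : Finite (K ⧸ (S ⊔ Z).subgroupOf K) := Finite.of_surjective _ hsurj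
  exact Subgroup.finiteIndex_of_finite_quotient
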